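/- (Denotational Completeness) For every type σ and every value a in Bσ there exists a closed term s of type σ such that B̂ s = a. -/

import Mathlib

namespace PTT


/-- Simple types over a single base type `B`. -/
inductive Ty : Type
  | base : Ty
  | arrow : Ty → Ty → Ty
deriving DecidableEq

/-- Names: the constants `⊥` and `→`, and variables (an index together with a type). -/
inductive Name : Type
  | bot : Name
  | imp : Name
  | var : ℕ → Ty → Name
deriving DecidableEq

/-- The type of a name. -/
def Name.ty : Name → Ty
  | .bot => .base
  | .imp => .arrow .base (.arrow .base .base)
  | .var _ σ => σ

/-- Terms: names, abstraction over a variable, application. -/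
inductive Tm : Type
  | name : Name → Tm
  | lam : ℕ → Ty → Tm → Tm
  | app : Tm → Tm → Tm
deriving DecidableEq

/-- The term `⊥`. -/
def botTm : Tm := .name .bot

/-- The variable `(n, σ)` as a term. -/
def vr (n : ℕ) (σ : Ty) : Tm := .name (.var n σ)

/-- Implication `s → t`. -/
def impTm (s t : Tm) : Tm := .app (.app (.name .imp) s) t

/-- `⊤ := ⊥ → ⊥`. -/
def topTm : Tm := impTm botTm botTm

/-- `¬ s := s → ⊥`. -/
def negTm (s : Tm) : Tm := impTm s botTm

/-- `s ∨ t := (s → t) → t`. -/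
def orTm (s t : Tm) : Tm := impTm (impTm s t) t

/-- `s ∧ t := ¬(¬s ∨ ¬t)`. -/
def andTm (s t : Tm) : Tm := negTm (orTm (negTm s) (negTm t))

/-- `s ≡ t := (s → t) ∧ (t → s)`. -/
def equivTm (s t : Tm) : Tm := andTm (impTm s t) (impTm t s)

/-- The typing relation. -/
inductive HasTy : Tm → Ty → Prop
  | name (x : Name) : HasTy (.name x) x.ty
  | lam {n σ s τ} : HasTy s τ → HasTy (.lam n σ s) (.arrow σ τ)
  | app {s t σ τ} : HasTy s (.arrow σ τ) → HasTy t σ → HasTy (.app s t) τ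

/-- Free variables of a term. -/
def fv : Tm → Finset (ℕ × Ty)
  | .name (.var n σ) => {(n, σ)}
  | .name _ => ∅
  | .lam n σ s => (fv s).erase (n, σ)
  | .app s t => fv s ∪ fv t

/-- A term is closed if it has no free variables. -/
def Closed (s : Tm) : Prop := fv s = ∅

/-- Capture-free parallel substitution (bound variables are renamed). -/
def substAux (ρ : ℕ × Ty → Tm) : Tm → Tm
  | .name (.var n σ) => ρ (n, σ)
  | .name x => .name x
  | .app s t => .app (substAux ρ s) (substAux ρ t)
  | .lam n σ s =>
      let used : Finset ℕ :=
        ((fv s).erase (n, σ)).biUnion (fun p => (fv (ρ p)).image Prod.fst)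
      let m : ℕ := used.sup id + 1
      .lam m σ (substAux (Function.update ρ (n, σ) (vr m σ)) s)

/-- Capture-free substitution `s[(n,σ) := t]`. -/
def subst (s : Tm) (n : ℕ) (σ : Ty) (t : Tm) : Tm :=
  substAux (Function.update (fun p => vr p.1 p.2) (n, σ) t) s

/-- Contexts: terms with exactly one hole (possibly under binders). -/
inductive Ctx : Type
  | hole : Ctx
  | lam : ℕ → Ty → Ctx → Ctx
  | appL : Ctx → Tm → Ctx
  | appR : Tm → Ctx → Ctx

/-- Filling the hole of a context with a term (capturing is allowed). -/
def Ctx.fill : Ctx → Tm → Tm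
  | .hole, s => s
  | .lam n σ C, s => .lam n σ (C.fill s)
  | .appL C t, s => .app (C.fill s) t
  | .appR t C, s => .app t (C.fill s)

/-- `C` captures the variable `p` if the hole of `C` lies below a binder for `p`. -/
def Ctx.captures : Ctx → ℕ × Ty → Prop
  | .hole, _ => False
  | .lam n σ C, p => p = (n, σ) ∨ C.captures p
  | .appL C _, p => C.captures p
  | .appR _ C, p => C.captures p

/-- `C` is admissible for `A` if it captures no variable free in `A`. -/
def Ctx.Admissible (C : Ctx) (A : Finset Tm) : Prop :=
  ∀ p ∈ A.biUnion fv, ¬ C.captures p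

/-- `s` is a subterm of `t`. -/
def Subterm (s t : Tm) : Prop := ∃ C : Ctx, C.fill s = t

/-- β-redexes. -/
def IsBetaRedex : Tm → Prop
  | .app (.lam _ _ _) _ => True
  | _ => False

/-- A term is β-normal if none of its subterms is a β-redex. -/
def BetaNormal (t : Tm) : Prop := ∀ s, Subterm s t → ¬ IsBetaRedex s

/-- Lambda equivalence: the least equivalence on well-typed terms containing
α-, β-, η-conversion and closed under arbitrary contexts. -/
inductive LamEq : Tm → Tm → Prop
  | refl {s σ} : HasTy s σ → LamEq s s
  | symm {s t} : LamEq s t → LamEq t s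
  | trans {s t u} : LamEq s t → LamEq t u → LamEq s u
  | alpha {n m σ s τ} : HasTy (.lam n σ s) τ → (m, σ) ∉ fv s →
      LamEq (.lam n σ s) (.lam m σ (subst s n σ (vr m σ)))
  | beta {n σ s t τ} : HasTy (.app (.lam n σ s) t) τ →
      LamEq (.app (.lam n σ s) t) (subst s n σ t)
  | eta {n σ s τ} : HasTy (.lam n σ (.app s (vr n σ))) τ → (n, σ) ∉ fv s →
      LamEq (.lam n σ (.app s (vr n σ))) s
  | ctx {s t σ} (C : Ctx) : LamEq s t → HasTy (C.fill s) σ → LamEq (C.fill s) (C.fill t)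

/-- The standard set-theoretic interpretation of types: `B` is interpreted as the
two truth values (`Bool`), functional types as full function spaces. -/
def Ty.sem : Ty → Type
  | .base => Bool
  | .arrow σ τ => σ.sem → τ.sem

def Ty.semDefault : (σ : Ty) → σ.sem
  | .base => false
  | .arrow _ τ => fun _ => τ.semDefault

instance (σ : Ty) : Inhabited σ.sem := ⟨σ.semDefault⟩

noncomputable instance Ty.semFintype : (σ : Ty) → Fintype σ.sem
  | .base => inferInstanceAs (Fintype Bool)
  | .arrow σ τ =>
      letI := Ty.semFintype σ
      letI := Ty.semFintype τ
      letI := Classical.decEq σ.sem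
      inferInstanceAs (Fintype (σ.sem → τ.sem))

def Ty.semCast {σ τ : Ty} (h : σ = τ) (v : σ.sem) : τ.sem := h ▸ v

/-- An interpretation assigns to every variable a value of the corresponding type
(the constants `⊥` and `→` have their values fixed). -/
def Interp : Type := ℕ → (σ : Ty) → σ.sem

def Interp.update (I : Interp) (n : ℕ) (σ : Ty) (v : σ.sem) : Interp :=
  fun m τ => if h : m = n ∧ τ = σ then Ty.semCast h.2.symm v else I m τ

/-- Type inference. -/
def typeOf : Tm → Option Ty
  | .name x => some x.ty
  | .lam _ σ s => (typeOf s).map (Ty.arrow σ)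
  | .app s t =>
      match typeOf s, typeOf t with
      | some (.arrow σ τ), some σ' => if σ = σ' then some τ else none
      | _, _ => none

/-- The canonical extension `Î` of an interpretation to all terms: `eval I s σ`
is the value of `s` at type `σ` (on well-typed terms this is the usual
denotation; junk default values are used at type mismatches). -/
def eval (I : Interp) : Tm → (σ : Ty) → σ.sem
  | .name (.var n τ), σ => if h : τ = σ then Ty.semCast h (I n τ) else default
  | .name .bot, σ =>
      match σ with
      | .base => false
      | _ => default
  | .name .imp, σ =>
      match σ with
      | .arrow .base (.arrow .base .base) => fun a b => !a || b
      | _ => default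
  | .app s t, σ =>
      match typeOf t with
      | some τ => eval I s (.arrow τ σ) (eval I t τ)
      | none => default
  | .lam n τ s, σ =>
      match σ with
      | .base => default
      | .arrow σ₁ σ₂ =>
          if h : σ₁ = τ then
            fun a => eval (I.update n τ (Ty.semCast h a)) s σ₂
          else default

/-- `I` satisfies the formula `s` if `Î s = 1`. -/
def Satisfies (I : Interp) (s : Tm) : Prop := eval I s .base = true

/-- A formula is valid if every interpretation satisfies it. -/
def ValidFml (s : Tm) : Prop := ∀ I : Interp, Satisfies I s

/-- A sequent `A ⇒ s` is valid if every interpretation satisfying `A` satisfies `s`. -/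
def ValidSeq (A : Finset Tm) (s : Tm) : Prop :=
  ∀ I : Interp, (∀ t ∈ A, Satisfies I t) → Satisfies I s

/-- Finite disjunction (the empty disjunction is `⊥`). -/
def orList : List Tm → Tm
  | [] => botTm
  | [s] => s
  | s :: l => orTm s (orList l)

/-- Finite conjunction (the empty conjunction is `⊤`). -/
def andList : List Tm → Tm
  | [] => topTm
  | [s] => s
  | s :: l => andTm s (andList l)

/-- The argument types of a type (every type has the form `σ₁…σₙB`). -/
def Ty.args : Ty → List Ty
  | .base => []
  | .arrow σ τ => σ :: τ.args

/-- Tuples of values along a list of types. -/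
def Tup : List Ty → Type
  | [] => PUnit
  | σ :: l => σ.sem × Tup l

noncomputable instance TupFintype : (l : List Ty) → Fintype (Tup l)
  | [] => inferInstanceAs (Fintype PUnit)
  | σ :: l =>
      letI := TupFintype l
      inferInstanceAs (Fintype (σ.sem × Tup l))

/-- Applying a function value to a tuple of arguments (the result type is `B`). -/
def Ty.applyTup : (σ : Ty) → σ.sem → Tup σ.args → Bool
  | .base, a, _ => a
  | .arrow _ τ, f, p => τ.applyTup (f p.1) p.2

/-- Quote/identity data for each type in a list: a quote function and the term `≐`. -/
def ArgData : List Ty → Type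
  | [] => PUnit
  | σ :: l => ((σ.sem → Tm) × Tm) × ArgData l

/-- The conjunction list `x_k ≐_{σ_k} (↓_{σ_k} b_k), …` for a tuple `b`. -/
def eqConj : (l : List Ty) → ArgData l → ℕ → Tup l → List Tm
  | [], _, _, _ => []
  | σ :: l, (d, ds), k, (b, bs) =>
      (.app (.app d.2 (vr k σ)) (d.1 b)) :: eqConj l ds (k + 1) bs

/-- `λ x_k : σ_k. …` binding one variable for each type in the list. -/
def mkLams : (l : List Ty) → ℕ → Tm → Tm
  | [], _, body => body
  | σ :: l, k, body => .lam k σ (mkLams l (k + 1) body)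

/-- The body of the quote term
`↓_{σ₁…σₙB} a := λx₁…xₙ. ⋁_{b₁…bₙ, a b₁…bₙ = 1} ⋀_j x_j ≐_{σ_j} (↓_{σ_j} b_j)`. -/
noncomputable def quoteBodyAux (σ : Ty) (ad : ArgData σ.args) (a : σ.sem) : Tm :=
  mkLams σ.args 0 (orList
    ((((Finset.univ : Finset (Tup σ.args)).toList.filter
        (fun b => σ.applyTup a b))).map
      (fun b => andList (eqConj σ.args ad 0 b))))

/-- `∀σ := λf. ⋀_{a ∈ Bσ} f (↓σ a)`, given the quote function for `σ`. -/
noncomputable def allTmAux (σ : Ty) (q : σ.sem → Tm) : Tm :=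
  .lam 0 (.arrow σ .base)
    (andList (((Finset.univ : Finset σ.sem).toList).map
      (fun a => .app (vr 0 (.arrow σ .base)) (q a))))

mutual
  /-- The quote function `↓σ` together with the identity term `≐σ`. -/
  noncomputable def quoteEq : (σ : Ty) → ((σ.sem → Tm) × Tm)
    | .base =>
        (fun a => quoteBodyAux .base PUnit.unit a,
         .lam 0 .base (.lam 1 .base (equivTm (vr 0 .base) (vr 1 .base))))
    | .arrow σ τ =>
        (fun a => quoteBodyAux (.arrow σ τ) ((quoteEq σ, argData τ) : ArgData (σ :: τ.args)) a,
         .lam 0 (.arrow σ τ) (.lam 1 (.arrow σ τ)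
           (.app (allTmAux σ (quoteEq σ).1)
             (.lam 2 σ
               (.app (.app (quoteEq τ).2
                  (.app (vr 0 (.arrow σ τ)) (vr 2 σ)))
                (.app (vr 1 (.arrow σ τ)) (vr 2 σ)))))))
  /-- Quote/identity data for all argument types of a type. -/
  noncomputable def argData : (σ : Ty) → ArgData σ.args
    | .base => PUnit.unit
    | .arrow σ τ => ((quoteEq σ, argData τ) : ArgData (σ :: τ.args))
end

/-- The quote function `↓σ : Bσ → Λ`. -/
noncomputable def quote (σ : Ty) (a : σ.sem) : Tm := (quoteEq σ).1 a

/-- The term `≐σ : σσB` denoting the identity predicate on `Bσ`. -/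
noncomputable def eqTm (σ : Ty) : Tm := (quoteEq σ).2

/-- The term `∀σ : (σB)B`. -/
noncomputable def allTm (σ : Ty) : Tm := allTmAux σ (quote σ)


/-- Propositional formulas: `s ::= x | ⊥ | s → s` with `x` a variable of type `B`. -/
inductive Propositional : Tm → Prop
  | var (n : ℕ) : Propositional (vr n .base)
  | bot : Propositional botTm
  | imp {s t} : Propositional s → Propositional t → Propositional (impTm s t)

/-- A type-respecting substitution of terms for variables. -/
def IsSubstitution (ρ : ℕ × Ty → Tm) : Prop := ∀ n σ, HasTy (ρ (n, σ)) σ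

/-- A formula is tautologous if it is a substitution instance of a tautology
(a valid propositional formula). -/
def Tautologous (s : Tm) : Prop :=
  ∃ t ρ, Propositional t ∧ ValidFml t ∧ IsSubstitution ρ ∧ s = substAux ρ t

/-- The proof system: Triv, Weak, Ded, MP, DN, Lam and Boolean replacement (BR).
Sequents consist of a finite set of formulas and a formula. -/
inductive Ded : Finset Tm → Tm → Prop
  | triv {A s} : (∀ t ∈ A, HasTy t .base) → HasTy s .base → Ded (insert s A) s
  | weak {A s t} : HasTy s .base → Ded A t → Ded (insert s A) t
  | ded {A s t} : Ded (insert s A) t → Ded A (impTm s t)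
  | mp {A s t} : Ded A (impTm s t) → Ded A s → Ded A t
  | dn {A s} : Ded A (negTm (negTm s)) → Ded A s
  | lam {A s t} : Ded A s → LamEq s t → HasTy t .base → Ded A t
  | br {A s t} (C : Ctx) : C.Admissible A → Ded A (equivTm s t) →
      Ded A (C.fill s) → HasTy (C.fill t) .base → Ded A (C.fill t)


/-! ### Auxiliary development for denotational completeness -/

/-- Size of a type. -/
def tsize : Ty → ℕ
  | .base => 1
  | .arrow σ τ => tsize σ + tsize τ + 1

lemma tsize_pos (σ : Ty) : 1 ≤ tsize σ := by
  cases σ <;> simp [tsize] <;> omega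

lemma argsSum (σ : Ty) : ((σ.args).map tsize).sum < tsize σ := by
  induction σ with
  | base => simp [Ty.args, tsize]
  | arrow σ τ ihσ ihτ => simp [Ty.args, tsize] at *; omega

lemma args_tsize {σ ρ : Ty} (h : ρ ∈ σ.args) : tsize ρ < tsize σ := by
  induction σ with
  | base => simp [Ty.args] at h
  | arrow σ τ ihσ ihτ =>
      simp [Ty.args] at h
      rcases h with rfl | h
      · simp [tsize]
      · have := ihτ h; simp [tsize]; omega

/-- Boolean literal terms. -/
def lit : Bool → Tm := fun b => if b then topTm else botTm

/-- Conditional at arbitrary type, built from boolean connectives. -/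
def cond' : Ty → ℕ → Tm → Tm → Tm → Tm
  | .base, _, c, t, e => orTm (andTm c t) (andTm (negTm c) e)
  | .arrow σ τ, k, c, t, e =>
      .lam k σ (cond' τ (k+1) c (.app t (vr k σ)) (.app e (vr k σ)))

/-- Iterated application. -/
def appList : Tm → List Tm → Tm
  | t, [] => t
  | t, u :: l => appList (.app t u) l

/-- Equality test of the variable `(0, σ)` against a fixed value `a`, given
quotations of tuples of arguments. -/
noncomputable def eqAt' (σ : Ty) (qts : Tup σ.args → List Tm) (a : σ.sem) : Tm :=
  andList ((Finset.univ : Finset (Tup σ.args)).toList.map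
    (fun b =>
      if σ.applyTup a b then appList (vr 0 σ) (qts b)
      else negTm (appList (vr 0 σ) (qts b))))

mutual
/-- A simple quote function. -/
noncomputable def qt : (σ : Ty) → σ.sem → Tm
  | .base, b => lit b
  | .arrow σ τ, f =>
      .lam 0 σ ((Finset.univ : Finset σ.sem).toList.foldr
        (fun a acc =>
          cond' τ 1 (eqAt' σ (fun b => qtTup σ.args b) a) (qt τ (f a)) acc)
        (qt τ default))
termination_by σ _ => 2 * tsize σ
decreasing_by
  · have := argsSum σ; simp [tsize]; omega
  · simp [tsize]
  · simp [tsize]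

/-- Quoting every component of a tuple. -/
noncomputable def qtTup : (l : List Ty) → Tup l → List Tm
  | [], _ => []
  | ρ :: l, b => qt ρ b.1 :: qtTup l b.2
termination_by l _ => 2 * (l.map tsize).sum + 1
decreasing_by
  · simp
  · have := tsize_pos ρ; simp; omega
end
/-! ### Basic lemmas -/

lemma typeOf_hasTy : ∀ (s : Tm) (σ : Ty), typeOf s = some σ → HasTy s σ := by
  intro s
  induction s with
  | name x => intro σ h; simp [typeOf] at h; subst h; exact .name x
  | lam n τ s ih =>
      intro σ h
      simp [typeOf, Option.map_eq_some_iff] at h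
      obtain ⟨ρ, hρ, rfl⟩ := h
      exact .lam (ih ρ hρ)
  | app s t ihs iht =>
      intro σ h
      unfold typeOf at h
      split at h
      · next σ₁ τ σ' hs ht =>
          split at h
          · next hh => cases h; subst hh; exact .app (ihs _ hs) (iht _ ht)
          · cases h
      · cases h

lemma typeOf_vr (n : ℕ) (σ : Ty) : typeOf (vr n σ) = some σ := rfl

lemma typeOf_bot : typeOf botTm = some .base := rfl

lemma typeOf_app {s t : Tm} {σ τ : Ty} (hs : typeOf s = some (.arrow σ τ))
    (ht : typeOf t = some σ) : typeOf (.app s t) = some τ := by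
  simp [typeOf, hs, ht]

lemma typeOf_imp {s t : Tm} (hs : typeOf s = some .base) (ht : typeOf t = some .base) :
    typeOf (impTm s t) = some .base := by
  simp [impTm, typeOf, Name.ty, hs, ht]

lemma typeOf_neg {s : Tm} (hs : typeOf s = some .base) : typeOf (negTm s) = some .base :=
  typeOf_imp hs typeOf_bot

lemma typeOf_top : typeOf topTm = some .base := typeOf_imp typeOf_bot typeOf_bot

lemma typeOf_or {s t : Tm} (hs : typeOf s = some .base) (ht : typeOf t = some .base) :
    typeOf (orTm s t) = some .base := typeOf_imp (typeOf_imp hs ht) ht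

lemma typeOf_and {s t : Tm} (hs : typeOf s = some .base) (ht : typeOf t = some .base) :
    typeOf (andTm s t) = some .base := typeOf_neg (typeOf_or (typeOf_neg hs) (typeOf_neg ht))

lemma typeOf_lit (b : Bool) : typeOf (lit b) = some .base := by
  cases b <;> simp [lit, typeOf_top, typeOf_bot]

/-! ### Evaluation lemmas -/

lemma eval_vr (I : Interp) (n : ℕ) (σ : Ty) : eval I (vr n σ) σ = I n σ := by
  show (if h : σ = σ then Ty.semCast h (I n σ) else default) = I n σ
  simp [Ty.semCast]

lemma eval_bot (I : Interp) : eval I botTm .base = false := rfl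

lemma eval_app (I : Interp) {t : Tm} {τ : Ty} (s : Tm) (σ : Ty) (ht : typeOf t = some τ) :
    eval I (.app s t) σ = eval I s (.arrow τ σ) (eval I t τ) := by
  show (match typeOf t with
      | some τ => eval I s (.arrow τ σ) (eval I t τ)
      | none => default) = _
  rw [ht]

lemma eval_lam (I : Interp) (n : ℕ) (σ τ : Ty) (s : Tm) :
    eval I (.lam n σ s) (.arrow σ τ) = fun a => eval (I.update n σ a) s τ := by
  show (if h : σ = σ then
              fun a => eval (I.update n σ (Ty.semCast h a)) s τ
            else default) = _
  simp [Ty.semCast]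

lemma eval_imp (I : Interp) {s t : Tm} (hs : typeOf s = some .base)
    (ht : typeOf t = some .base) :
    eval I (impTm s t) .base = (!eval I s .base || eval I t .base) := by
  rw [impTm, eval_app I _ _ ht, eval_app I _ _ hs]
  rfl

lemma eval_neg (I : Interp) {s : Tm} (hs : typeOf s = some .base) :
    eval I (negTm s) .base = !eval I s .base := by
  rw [negTm, eval_imp I hs typeOf_bot, eval_bot]
  simp
  rfl

lemma eval_top (I : Interp) : eval I topTm .base = true := by
  rw [topTm, eval_imp I typeOf_bot typeOf_bot, eval_bot]; rfl

lemma eval_lit (I : Interp) (b : Bool) : eval I (lit b) .base = b := by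
  cases b <;> simp [lit, eval_top, eval_bot] <;> rfl

lemma eval_or (I : Interp) {s t : Tm} (hs : typeOf s = some .base)
    (ht : typeOf t = some .base) :
    eval I (orTm s t) .base = (eval I s .base || eval I t .base) := by
  rw [orTm, eval_imp I (typeOf_imp hs ht) ht, eval_imp I hs ht]
  cases eval I s .base <;> cases eval I t .base <;> rfl

lemma eval_and (I : Interp) {s t : Tm} (hs : typeOf s = some .base)
    (ht : typeOf t = some .base) :
    eval I (andTm s t) .base = (eval I s .base && eval I t .base) := by
  rw [andTm, eval_neg I (typeOf_or (typeOf_neg hs) (typeOf_neg ht)),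
    eval_or I (typeOf_neg hs) (typeOf_neg ht), eval_neg I hs, eval_neg I ht]
  cases eval I s .base <;> cases eval I t .base <;> rfl

/-! ### Interpretation updates and free variables -/

lemma update_self (I : Interp) (n : ℕ) (σ : Ty) (v : σ.sem) :
    I.update n σ v n σ = v := by
  simp [Interp.update, Ty.semCast]

lemma update_ne (I : Interp) {n m : ℕ} {σ τ : Ty} (v : σ.sem)
    (h : ¬ (m = n ∧ τ = σ)) : I.update n σ v m τ = I m τ := by
  simp [Interp.update, h]

lemma fv_imp (s t : Tm) : fv (impTm s t) = fv s ∪ fv t := by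
  simp [impTm, fv]

lemma fv_bot : fv botTm = ∅ := rfl

lemma fv_neg (s : Tm) : fv (negTm s) = fv s := by
  simp [negTm, fv_imp, fv_bot]

lemma fv_or (s t : Tm) : fv (orTm s t) = fv s ∪ fv t ∪ fv t := by
  simp [orTm, fv_imp]

lemma fv_and (s t : Tm) : fv (andTm s t) = fv s ∪ fv t ∪ fv t := by
  simp [andTm, fv_neg, fv_or, fv_imp]

lemma fv_vr (n : ℕ) (σ : Ty) : fv (vr n σ) = {(n, σ)} := rfl

lemma fv_lit (b : Bool) : fv (lit b) = ∅ := by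
  cases b <;> rfl

lemma eval_agree : ∀ (s : Tm) (I J : Interp),
    (∀ n τ, (n, τ) ∈ fv s → I n τ = J n τ) → ∀ σ, eval I s σ = eval J s σ := by
  intro s
  induction s with
  | name x =>
      cases x with
      | var n τ =>
          intro I J h σ
          show (if h : τ = σ then Ty.semCast h (I n τ) else default) =
            (if h : τ = σ then Ty.semCast h (J n τ) else default)
          split
          · next hh => subst hh; rw [h n τ (by simp [fv])]
          · rfl
      | bot => intro I J h σ; rfl
      | imp => intro I J h σ; rfl
  | lam n τ' s ih =>
      intro I J h σ
      cases σ with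
      | base => rfl
      | arrow σ₁ σ₂ =>
          show (if h : σ₁ = τ' then
              fun a => eval (I.update n τ' (Ty.semCast h a)) s σ₂ else default) =
            (if h : σ₁ = τ' then
              fun a => eval (J.update n τ' (Ty.semCast h a)) s σ₂ else default)
          split
          · next hh =>
              subst hh
              funext a
              apply ih
              intro m ρ hm
              by_cases hp : m = n ∧ ρ = σ₁
              · obtain ⟨rfl, rfl⟩ := hp
                rw [update_self, update_self]
              · rw [update_ne _ _ hp, update_ne _ _ hp]
                apply h
                simp only [fv, Finset.mem_erase]
                exact ⟨by simpa [eq_comm, And.comm, Prod.ext_iff] using hp, hm⟩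
          · rfl
  | app s t ihs iht =>
      intro I J h σ
      have hs : ∀ n τ, (n, τ) ∈ fv s → I n τ = J n τ := by
        intro n τ hn; exact h n τ (by simp [fv, hn])
      have ht : ∀ n τ, (n, τ) ∈ fv t → I n τ = J n τ := by
        intro n τ hn; exact h n τ (by simp [fv, hn])
      cases h' : typeOf t with
      | none =>
          show (match typeOf t with
              | some τ => eval I s (.arrow τ σ) (eval I t τ)
              | none => default) =
            (match typeOf t with
              | some τ => eval J s (.arrow τ σ) (eval J t τ)
              | none => default)
          rw [h']
      | some τ => rw [eval_app I s σ h', eval_app J s σ h', ihs I J hs, iht I J ht]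
/-! ### andList, cond', appList -/

lemma fv_app (s t : Tm) : fv (.app s t) = fv s ∪ fv t := rfl

lemma fv_lam (n : ℕ) (σ : Ty) (s : Tm) : fv (.lam n σ s) = (fv s).erase (n, σ) := rfl

lemma andList_cons (s t : Tm) (L : List Tm) :
    andList (s :: t :: L) = andTm s (andList (t :: L)) := rfl

lemma typeOf_andList : ∀ (L : List Tm), (∀ s ∈ L, typeOf s = some .base) →
    typeOf (andList L) = some .base := by
  intro L
  induction L with
  | nil => intro _; exact typeOf_top
  | cons s L ih =>
      intro h
      cases L with
      | nil => exact h s (by simp)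
      | cons t L =>
          rw [andList_cons]
          exact typeOf_and (h s (by simp)) (ih (fun u hu => h u (by simp [hu])))

lemma eval_andList : ∀ (L : List Tm) (I : Interp), (∀ s ∈ L, typeOf s = some .base) →
    eval I (andList L) .base = L.all (fun s => eval I s .base) := by
  intro L
  induction L with
  | nil => intro I _; simp [andList, eval_top]; rfl
  | cons s L ih =>
      intro I h
      cases L with
      | nil => exact (Bool.and_true _).symm
      | cons t L =>
          rw [andList_cons, eval_and I (h s (by simp))
            (typeOf_andList _ (fun u hu => h u (by simp [hu]))),
            ih I (fun u hu => h u (by simp [hu]))]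
          rfl

lemma fv_andList : ∀ (L : List Tm) (A : Finset (ℕ × Ty)), (∀ s ∈ L, fv s ⊆ A) →
    fv (andList L) ⊆ A := by
  intro L
  induction L with
  | nil => intro A _; simp [andList, topTm, fv_imp, fv_bot]
  | cons s L ih =>
      intro A h
      cases L with
      | nil => exact h s (by simp)
      | cons t L =>
          rw [andList_cons, fv_and]
          have h1 := h s (by simp)
          have h2 := ih A (fun u hu => h u (by simp [hu]))
          intro p hp
          simp only [Finset.mem_union] at hp
          rcases hp with (hp | hp) | hp
          · exact h1 hp
          · exact h2 hp
          · exact h2 hp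

/-- All free variables have index below `k`. -/
def Below (k : ℕ) (s : Tm) : Prop := ∀ p ∈ fv s, p.1 < k

lemma eval_update_below {k : ℕ} {s : Tm} (h : Below k s) (I : Interp) {m : ℕ}
    (hm : k ≤ m) (σ : Ty) (v : σ.sem) (τ : Ty) :
    eval (I.update m σ v) s τ = eval I s τ := by
  apply eval_agree
  intro n ρ hn
  have := h (n, ρ) hn
  exact update_ne _ _ (by simp; omega)

lemma typeOf_cond' : ∀ (τ : Ty) (k : ℕ) (c t e : Tm), typeOf c = some .base →
    typeOf t = some τ → typeOf e = some τ → typeOf (cond' τ k c t e) = some τ := by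
  intro τ
  induction τ with
  | base =>
      intro k c t e hc ht he
      exact typeOf_or (typeOf_and hc ht) (typeOf_and (typeOf_neg hc) he)
  | arrow σ τ ihσ ihτ =>
      intro k c t e hc ht he
      rw [cond']
      have := ihτ (k+1) c (.app t (vr k σ)) (.app e (vr k σ)) hc
        (typeOf_app ht (typeOf_vr k σ)) (typeOf_app he (typeOf_vr k σ))
      simp [typeOf, this]

lemma fv_cond' : ∀ (τ : Ty) (k : ℕ) (c t e : Tm),
    fv (cond' τ k c t e) ⊆ fv c ∪ fv t ∪ fv e := by
  intro τ
  induction τ with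
  | base =>
      intro k c t e
      rw [cond', fv_or, fv_and, fv_and, fv_neg]
      intro p hp
      simp only [Finset.mem_union] at hp ⊢
      tauto
  | arrow σ τ ihσ ihτ =>
      intro k c t e
      rw [cond']
      intro p hp
      rw [fv_lam, Finset.mem_erase] at hp
      obtain ⟨hne, hp⟩ := hp
      have h2 := ihτ (k+1) c (.app t (vr k σ)) (.app e (vr k σ)) hp
      rw [fv_app, fv_app, fv_vr] at h2
      simp only [Finset.mem_union, Finset.mem_singleton] at h2 ⊢
      tauto

lemma below_mono {k m : ℕ} {s : Tm} (h : Below k s) (hkm : k ≤ m) : Below m s :=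
  fun p hp => lt_of_lt_of_le (h p hp) hkm

lemma eval_cond' : ∀ (τ : Ty) (k : ℕ) (c t e : Tm) (I : Interp),
    typeOf c = some .base → typeOf t = some τ → typeOf e = some τ →
    Below k c → Below k t → Below k e →
    eval I (cond' τ k c t e) τ =
      (cond (eval I c .base) (eval I t τ) (eval I e τ)) := by
  intro τ
  induction τ with
  | base =>
      intro k c t e I hc ht he _ _ _
      rw [cond', eval_or I (typeOf_and hc ht) (typeOf_and (typeOf_neg hc) he),
        eval_and I hc ht, eval_and I (typeOf_neg hc) he, eval_neg I hc]
      cases eval I c .base <;> cases eval I t .base <;> cases eval I e .base <;> rfl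
  | arrow σ τ ihσ ihτ =>
      intro k c t e I hc ht he bc bt be
      rw [cond', eval_lam]
      funext a
      have hta : typeOf (.app t (vr k σ)) = some τ := typeOf_app ht (typeOf_vr k σ)
      have hea : typeOf (.app e (vr k σ)) = some τ := typeOf_app he (typeOf_vr k σ)
      have bta : Below (k+1) (.app t (vr k σ)) := by
        intro p hp
        simp only [fv_app, fv_vr, Finset.mem_union, Finset.mem_singleton] at hp
        rcases hp with hp | rfl
        · exact lt_of_lt_of_le (bt p hp) (by omega)
        · simp
      have bea : Below (k+1) (.app e (vr k σ)) := by
        intro p hp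
        simp only [fv_app, fv_vr, Finset.mem_union, Finset.mem_singleton] at hp
        rcases hp with hp | rfl
        · exact lt_of_lt_of_le (be p hp) (by omega)
        · simp
      rw [ihτ (k+1) c _ _ _ hc hta hea (below_mono bc (by omega)) bta bea]
      rw [eval_update_below bc I (le_refl k) σ a .base]
      rw [eval_app _ _ _ (typeOf_vr k σ), eval_app _ _ _ (typeOf_vr k σ)]
      rw [eval_vr, update_self]
      rw [eval_update_below bt I (le_refl k) σ a (.arrow σ τ)]
      rw [eval_update_below be I (le_refl k) σ a (.arrow σ τ)]
      cases eval I c .base <;> simp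
/-! ### Quote specification -/

lemma applyTup_inj : ∀ (σ : Ty) (x y : σ.sem),
    (∀ b : Tup σ.args, σ.applyTup x b = σ.applyTup y b) → x = y := by
  intro σ
  induction σ with
  | base => intro x y h; exact h PUnit.unit
  | arrow σ τ ihσ ihτ =>
      intro x y h
      funext v
      exact ihτ (x v) (y v) (fun b => h (v, b))

/-- The full specification of the quote function `qt`. -/
def Q (ρ : Ty) : Prop :=
  ∀ x : ρ.sem, typeOf (qt ρ x) = some ρ ∧ fv (qt ρ x) = ∅ ∧ ∀ I, eval I (qt ρ x) ρ = x

lemma appList_spec : ∀ (σ : Ty), (∀ ρ ∈ σ.args, Q ρ) → ∀ t, typeOf t = some σ →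
    ∀ b : Tup σ.args,
      typeOf (appList t (qtTup σ.args b)) = some .base ∧
      fv (appList t (qtTup σ.args b)) ⊆ fv t ∧
      ∀ I, eval I (appList t (qtTup σ.args b)) .base = σ.applyTup (eval I t σ) b := by
  intro σ
  induction σ with
  | base =>
      intro _ t ht b
      have e0 : qtTup Ty.base.args b = [] := by
        show qtTup [] b = []
        exact qtTup.eq_1 _
      rw [e0]
      exact ⟨ht, Finset.Subset.refl _, fun I => rfl⟩
  | arrow σ τ ihσ ihτ =>
      intro hQ t ht b
      obtain ⟨hq1, hq2, hq3⟩ := hQ σ (by simp [Ty.args]) b.1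
      have hQτ : ∀ ρ ∈ τ.args, Q ρ := fun ρ hρ => hQ ρ (by simp [Ty.args, hρ])
      have e1 : qtTup (Ty.arrow σ τ).args b = qt σ b.1 :: qtTup τ.args b.2 := by
        show qtTup (σ :: τ.args) b = qt σ b.1 :: qtTup τ.args b.2
        exact qtTup.eq_2 _ _ _
      have hta : typeOf (.app t (qt σ b.1)) = some τ := typeOf_app ht hq1
      obtain ⟨h1, h2, h3⟩ := ihτ hQτ (.app t (qt σ b.1)) hta b.2
      rw [e1, show appList t (qt σ b.1 :: qtTup τ.args b.2) =
        appList (.app t (qt σ b.1)) (qtTup τ.args b.2) from rfl]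
      refine ⟨h1, ?_, ?_⟩
      · intro p hp
        have := h2 hp
        rw [fv_app, hq2] at this
        simpa using this
      · intro I
        rw [h3 I, eval_app I t τ hq1, hq3 I]
        rfl

lemma eqAt'_spec (σ : Ty) (hQ : ∀ ρ ∈ σ.args, Q ρ) (a : σ.sem) :
    typeOf (eqAt' σ (fun b => qtTup σ.args b) a) = some .base ∧
    fv (eqAt' σ (fun b => qtTup σ.args b) a) ⊆ {(0, σ)} ∧
    ∀ I : Interp, (eval I (eqAt' σ (fun b => qtTup σ.args b) a) .base = true ↔ I 0 σ = a) := by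
  have hspec := fun b : Tup σ.args => appList_spec σ hQ (vr 0 σ) (typeOf_vr 0 σ) b
  simp only [eqAt']
  set g : Tup σ.args → Tm := fun b =>
    if σ.applyTup a b then appList (vr 0 σ) (qtTup σ.args b)
    else negTm (appList (vr 0 σ) (qtTup σ.args b)) with hg
  have hty : ∀ b, typeOf (g b) = some .base := by
    intro b
    cases hab : σ.applyTup a b <;>
      simp [hg, hab, (hspec b).1, typeOf_neg (hspec b).1]
  have hfv : ∀ b, fv (g b) ⊆ {(0, σ)} := by
    intro b
    have h1 := (hspec b).2.1
    rw [fv_vr] at h1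
    cases hab : σ.applyTup a b <;> simp only [hg, hab, if_true, if_false,
      Bool.false_eq_true, fv_neg] <;> exact h1
  have hev : ∀ I b, eval I (g b) .base = (σ.applyTup (I 0 σ) b == σ.applyTup a b) := by
    intro I b
    have he := (hspec b).2.2 I
    rw [eval_vr] at he
    cases hab : σ.applyTup a b
    · simp only [hg, hab, Bool.false_eq_true, if_false]
      rw [eval_neg I (hspec b).1, he]
      cases σ.applyTup (I 0 σ) b <;> rfl
    · simp only [hg, hab, if_true]
      rw [he]
      cases σ.applyTup (I 0 σ) b <;> rfl
  have hmem : ∀ s ∈ (Finset.univ : Finset (Tup σ.args)).toList.map g, ∃ b, s = g b := by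
    intro s hs
    rw [List.mem_map] at hs
    obtain ⟨b, _, rfl⟩ := hs
    exact ⟨b, rfl⟩
  have htyL : ∀ s ∈ (Finset.univ : Finset (Tup σ.args)).toList.map g,
      typeOf s = some .base := by
    intro s hs; obtain ⟨b, rfl⟩ := hmem s hs; exact hty b
  refine ⟨typeOf_andList _ htyL, fv_andList _ _ ?_, ?_⟩
  · intro s hs; obtain ⟨b, rfl⟩ := hmem s hs; exact hfv b
  · intro I
    rw [eval_andList _ I htyL]
    refine Iff.trans List.all_eq_true ?_
    constructor
    · intro h
      apply applyTup_inj
      intro b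
      have hb := h (g b) (List.mem_map.mpr ⟨b, Finset.mem_toList.mpr (Finset.mem_univ b), rfl⟩)
      rw [hev I b] at hb
      exact eq_of_beq hb
    · intro h s hs
      obtain ⟨b, rfl⟩ := hmem s hs
      rw [hev I b, h]
      exact beq_self_eq_true _

lemma Q_all : ∀ (n : ℕ) (σ : Ty), tsize σ ≤ n → Q σ := by
  intro n
  induction n with
  | zero => intro σ h; have := tsize_pos σ; omega
  | succ n ih =>
      intro σ h
      cases σ with
      | base =>
          intro x
          refine ⟨?_, ?_, fun I => ?_⟩
          · simp only [qt]; exact typeOf_lit x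
          · simp only [qt]; exact fv_lit x
          · simp only [qt]; exact eval_lit I x
      | arrow σ τ =>
          simp only [tsize] at h
          have hQσ : Q σ := ih σ (by omega)
          have hQτ : Q τ := ih τ (by omega)
          have hQargs : ∀ ρ ∈ σ.args, Q ρ := fun ρ hρ =>
            ih ρ (by have := args_tsize hρ; omega)
          intro f
          have hE := fun a : σ.sem => eqAt'_spec σ hQargs a
          set step : σ.sem → Tm → Tm := fun a acc =>
            cond' τ 1 (eqAt' σ (fun b => qtTup σ.args b) a) (qt τ (f a)) acc with hstep
          have chain_spec : ∀ L : List σ.sem,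
              typeOf (L.foldr step (qt τ default)) = some τ ∧
              fv (L.foldr step (qt τ default)) ⊆ {(0, σ)} := by
            intro L
            induction L with
            | nil =>
                refine ⟨(hQτ default).1, ?_⟩
                rw [List.foldr_nil, (hQτ default).2.1]
                simp
            | cons a L ihL =>
                rw [List.foldr_cons, hstep]
                constructor
                · exact typeOf_cond' τ 1 _ _ _ (hE a).1 (hQτ (f a)).1 ihL.1
                · refine subset_trans (fv_cond' τ 1 _ _ _) ?_
                  intro p hp
                  simp only [Finset.mem_union] at hp
                  rcases hp with (hp | hp) | hp
                  · exact (hE a).2.1 hp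
                  · rw [(hQτ (f a)).2.1] at hp; simp at hp
                  · exact ihL.2 hp
          have chain_eval : ∀ (L : List σ.sem) (J : Interp), J 0 σ ∈ L →
              eval J (L.foldr step (qt τ default)) τ = f (J 0 σ) := by
            intro L
            induction L with
            | nil => intro J hJ; simp at hJ
            | cons a L ihL =>
                intro J hJ
                have hbc : Below 1 (eqAt' σ (fun b => qtTup σ.args b) a) := by
                  intro p hp
                  have := (hE a).2.1 hp
                  rw [Finset.mem_singleton] at this
                  rw [this]
                  exact Nat.zero_lt_one
                have hbt : Below 1 (qt τ (f a)) := by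
                  intro p hp
                  rw [(hQτ (f a)).2.1] at hp
                  simp at hp
                have hbe : Below 1 (L.foldr step (qt τ default)) := by
                  intro p hp
                  have := (chain_spec L).2 hp
                  rw [Finset.mem_singleton] at this
                  rw [this]
                  exact Nat.zero_lt_one
                rw [List.foldr_cons, hstep]
                rw [eval_cond' τ 1 _ _ _ J (hE a).1 (hQτ (f a)).1 (chain_spec L).1 hbc hbt hbe]
                by_cases hv : J 0 σ = a
                · have hb : eval J (eqAt' σ (fun b => qtTup σ.args b) a) .base = true :=
                    ((hE a).2.2 J).mpr hv
                  rw [hb, cond_true, (hQτ (f a)).2.2 J, hv]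
                · have hb : eval J (eqAt' σ (fun b => qtTup σ.args b) a) .base = false := by
                    cases hb' : eval J (eqAt' σ (fun b => qtTup σ.args b) a) .base
                    · rfl
                    · exact absurd (((hE a).2.2 J).mp hb') hv
                  rw [hb, cond_false]
                  apply ihL
                  rcases List.mem_cons.mp hJ with h' | h'
                  · exact absurd h' hv
                  · exact h'
          have hqeq : qt (.arrow σ τ) f =
              .lam 0 σ ((Finset.univ : Finset σ.sem).toList.foldr step (qt τ default)) := by
            rw [qt, hstep]
          refine ⟨?_, ?_, ?_⟩
          · rw [hqeq]
            simp [typeOf, (chain_spec _).1]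
          · rw [hqeq, fv_lam]
            rw [Finset.eq_empty_iff_forall_notMem]
            intro p hp
            rw [Finset.mem_erase] at hp
            exact hp.1 (Finset.mem_singleton.mp ((chain_spec _).2 hp.2))
          · intro I
            rw [hqeq, eval_lam]
            funext v
            rw [chain_eval _ _ (by
              rw [update_self]
              exact Finset.mem_toList.mpr (Finset.mem_univ v)), update_self]

/-- Denotational Completeness: every value of the full set-theoretic
type hierarchy is the denotation of some closed term. -/
theorem denotational_completeness (σ : Ty) (a : σ.sem) :
    ∃ s : Tm, Closed s ∧ HasTy s σ ∧ ∀ I : Interp, eval I s σ = a := by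
  obtain ⟨h1, h2, h3⟩ := Q_all (tsize σ) σ (le_refl _) a
  exact ⟨qt σ a, h2, typeOf_hasTy _ _ h1, h3⟩

end PTT
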